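/- For all integers ℓ ≥ 0 and k ≥ 1, the graph T(u,v,k,ℓ) is triangle-free, i.e., it contains no clique on 3 vertices. -/

import Mathlib

/-- The base relation for the graph `P(u,v,b)`: vertices are `Sum.inl 0 = u`,
`Sum.inl 1 = v`, and `Sum.inr i = v_{i+1}` (0-indexed path vertices).
Edges: consecutive path vertices, `u` to odd-numbered path vertices `v₁, v₃, …`
(even 0-based index), and `v` to even-numbered ones `v₂, v₄, …`. -/
def PAdj (b : ℕ) : (Fin 2 ⊕ Fin b) → (Fin 2 ⊕ Fin b) → Prop
  | Sum.inr i, Sum.inr j => (j : ℕ) = (i : ℕ) + 1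
  | Sum.inl x, Sum.inr i => (x : ℕ) = (i : ℕ) % 2
  | _, _ => False

/-- The graph `P(u,v,b)`. -/
def Pgraph (b : ℕ) : SimpleGraph (Fin 2 ⊕ Fin b) := SimpleGraph.fromRel (PAdj b)

/-- The set of proper 3-colorings of a graph `G`. -/
def properColorings {V : Type*} (G : SimpleGraph V) : Set (V → Fin 3) :=
  {ψ | ∀ a b, G.Adj a b → ψ a ≠ ψ b}

/-- The type of "inner" vertices of `T(u,v,k,ℓ)` (all vertices except the two
special vertices `u, v`). At level `0` these are the `2^k` path vertices of
`P(u,v,2^k)`; at level `ℓ+1` they are the five path vertices `v₁,…,v₅` of the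
base copy of `P(u,v,5)` together with the inner vertices of the three glued
copies of `T(·,·,k,ℓ)`. -/
def TInner (k : ℕ) : ℕ → Type
  | 0 => Fin (2 ^ k)
  | ℓ + 1 => Fin 5 ⊕ (Fin 3 × TInner k ℓ)

/-- The vertex type of `T(u,v,k,ℓ)`: the special vertices `u = Sum.inl 0`,
`v = Sum.inl 1` together with the inner vertices. -/
abbrev TVert (k ℓ : ℕ) : Type := Fin 2 ⊕ TInner k ℓ

/-- The pair of path vertices of `P(u,v,5)` onto which the `c`-th copy of
`T(·,·,k,ℓ-1)` is glued: `(v₁,v₃)` for `c = 0`, `(v₂,v₄)` for `c = 1`,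
`(v₃,v₅)` for `c = 2` (0-indexed). -/
def gluePair (c : Fin 3) : Fin 5 × Fin 5 :=
  (⟨c.val, by omega⟩, ⟨c.val + 2, by have := c.isLt; omega⟩)

/-- The embedding of the `c`-th copy of `T(·,·,k,ℓ)` into `T(u,v,k,ℓ+1)`:
its special vertices are identified with the glue pair, and its inner vertices
are tagged with `c`. -/
def embedT (k ℓ : ℕ) (c : Fin 3) : TVert k ℓ → TVert k (ℓ + 1)
  | Sum.inl x => if x = 0 then Sum.inr (Sum.inl (gluePair c).1)
                 else Sum.inr (Sum.inl (gluePair c).2)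
  | Sum.inr w => Sum.inr (Sum.inr (c, w))

/-- The embedding of the base copy of `P(u,v,5)` into `T(u,v,k,ℓ+1)`. -/
def embedP (k ℓ : ℕ) : (Fin 2 ⊕ Fin 5) → TVert k (ℓ + 1)
  | Sum.inl x => Sum.inl x
  | Sum.inr y => Sum.inr (Sum.inl y)

/-- The graph `T(u,v,k,ℓ)`, defined recursively: `T(u,v,k,0) = P(u,v,2^k)`, and
`T(u,v,k,ℓ+1)` is obtained from `P(u,v,5)` by gluing three copies of
`T(·,·,k,ℓ)` onto the pairs `(v₁,v₃)`, `(v₂,v₄)`, `(v₃,v₅)`. -/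
def TGraph (k : ℕ) : (ℓ : ℕ) → SimpleGraph (TVert k ℓ)
  | 0 => Pgraph (2 ^ k)
  | ℓ + 1 => SimpleGraph.fromRel (fun a b =>
      (∃ x y, (Pgraph 5).Adj x y ∧ a = embedP k ℓ x ∧ b = embedP k ℓ y) ∨
      (∃ c x y, (TGraph k ℓ).Adj x y ∧ a = embedT k ℓ c x ∧ b = embedT k ℓ c y))

section Helpers

/-- A 2-coloring of `Pgraph b`. -/
def pcol {b : ℕ} : (Fin 2 ⊕ Fin b) → ℕ
  | Sum.inl x => 1 - (x : ℕ)
  | Sum.inr i => (i : ℕ) % 2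

lemma pcol_lt {b : ℕ} (a : Fin 2 ⊕ Fin b) : pcol a < 2 := by
  cases a with
  | inl x => simp only [pcol]; omega
  | inr i => simp only [pcol]; omega

lemma padj_ne {b : ℕ} {a c : Fin 2 ⊕ Fin b} (h : PAdj b a c) :
    pcol a ≠ pcol c := by
  cases a with
  | inl x => cases c with
    | inl y => exact absurd h (by simp [PAdj])
    | inr i =>
      have hx : (x : ℕ) < 2 := x.isLt
      simp only [PAdj] at h
      simp only [pcol]; omega
  | inr i => cases c with
    | inl y => exact absurd h (by simp [PAdj])
    | inr j =>
      simp only [PAdj] at h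
      simp only [pcol]; omega

lemma pcol_ne {b : ℕ} {a c : Fin 2 ⊕ Fin b} (h : (Pgraph b).Adj a c) :
    pcol a ≠ pcol c := by
  rw [Pgraph, SimpleGraph.fromRel_adj] at h
  obtain ⟨hne, h | h⟩ := h
  · exact padj_ne h
  · exact (padj_ne h).symm

lemma Pnt {b : ℕ} {x y z : Fin 2 ⊕ Fin b} (h1 : (Pgraph b).Adj x y)
    (h2 : (Pgraph b).Adj x z) (h3 : (Pgraph b).Adj y z) : False := by
  have := pcol_ne h1; have := pcol_ne h2; have := pcol_ne h3
  have := pcol_lt x; have := pcol_lt y; have := pcol_lt z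
  omega

lemma PUV {b : ℕ} (s t : Fin 2) : ¬ (Pgraph b).Adj (Sum.inl s) (Sum.inl t) := by
  intro h
  rw [Pgraph, SimpleGraph.fromRel_adj] at h
  obtain ⟨-, h | h⟩ := h <;> exact h

lemma PCN {b : ℕ} (s t : Fin 2) (w : Fin 2 ⊕ Fin b) (hst : s ≠ t)
    (h1 : (Pgraph b).Adj (Sum.inl s) w) (h2 : (Pgraph b).Adj (Sum.inl t) w) : False := by
  cases w with
  | inl y => exact PUV s y h1
  | inr i =>
    rw [Pgraph, SimpleGraph.fromRel_adj] at h1 h2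
    obtain ⟨-, h1 | h1⟩ := h1 <;> obtain ⟨-, h2 | h2⟩ := h2 <;>
      simp only [PAdj] at h1 h2 <;>
      first
      | exact h1
      | exact h2
      | exact hst (Fin.ext (h1.trans h2.symm))

end Helpers
section Embed

lemma embedT_isr (k ℓ : ℕ) (c : Fin 3) (x : TVert k ℓ) :
    ∃ z, embedT k ℓ c x = Sum.inr z := by
  cases x with
  | inl s =>
    by_cases h : s = 0 <;> simp [embedT, h] <;> exact ⟨_, rfl⟩
  | inr w => exact ⟨_, rfl⟩

lemma embedP_inl_inv {k ℓ : ℕ} {s : Fin 2} {x : Fin 2 ⊕ Fin 5}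
    (h : Sum.inl s = embedP k ℓ x) : x = Sum.inl s := by
  cases x with
  | inl t => simpa [embedP] using h.symm
  | inr y => simp [embedP] at h

lemma embedP_inj {k ℓ : ℕ} : Function.Injective (embedP k ℓ) := by
  intro x y h
  cases x <;> cases y <;> simp only [embedP] at h <;>
    first
      | (injection h with h'; rw [h'])
      | (injection h with h'; injection h' with h''; rw [h''])
      | exact absurd h (by simp)

lemma glue_ne (c : Fin 3) : (gluePair c).1 ≠ (gluePair c).2 := by
  simp [gluePair, Fin.ext_iff]

lemma embedT_inj {k ℓ : ℕ} (c : Fin 3) : Function.Injective (embedT k ℓ c) := by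
  intro x y h
  cases x with
  | inl s => cases y with
    | inl t =>
      by_cases hs : s = 0 <;> by_cases ht : t = 0 <;>
        simp only [embedT, hs, ht, if_true, if_false, ite_true, ite_false] at h <;>
        [skip; skip; skip; skip] <;>
        first
        | (subst hs; subst ht; rfl)
        | (have h1 : (s : ℕ) ≠ 0 := fun hh => hs (Fin.ext hh)
           have h2 : (t : ℕ) ≠ 0 := fun hh => ht (Fin.ext hh)
           have h3 := s.isLt; have h4 := t.isLt
           have : s = t := Fin.ext (by omega)
           rw [this])
        | (injection h with h'; injection h' with h'';
           first
             | exact absurd h'' (glue_ne c)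
             | exact absurd h''.symm (glue_ne c))
    | inr w => by_cases hs : s = 0 <;> simp [embedT, hs] at h <;> cases h
  | inr w => cases y with
    | inl t => by_cases ht : t = 0 <;> simp [embedT, ht] at h <;> cases h
    | inr w' =>
      injection h with h'
      injection h' with h''
      injection h'' with h1 h2
      rw [h2]

lemma specOfP {k ℓ : ℕ} {c : Fin 3} {x : TVert k ℓ} {p : Fin 2 ⊕ Fin 5}
    (h : embedT k ℓ c x = embedP k ℓ p) : ∃ s : Fin 2, x = Sum.inl s := by
  cases x with
  | inl s => exact ⟨s, rfl⟩
  | inr w => cases p <;> simp [embedT, embedP] at h <;> cases h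

lemma specOfNe {k ℓ : ℕ} {c c' : Fin 3} {x x' : TVert k ℓ} (hcc : c ≠ c')
    (h : embedT k ℓ c x = embedT k ℓ c' x') :
    (∃ s : Fin 2, x = Sum.inl s) ∧ (∃ s : Fin 2, x' = Sum.inl s) := by
  cases x with
  | inl s => cases x' with
    | inl t => exact ⟨⟨s, rfl⟩, ⟨t, rfl⟩⟩
    | inr w => exact absurd h (by by_cases hs : s = 0 <;> simp [embedT, hs] <;> intro hh <;> cases hh)
  | inr w => cases x' with
    | inl t => exact absurd h (by by_cases ht : t = 0 <;> simp [embedT, ht] <;> intro hh <;> cases hh)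
    | inr w' =>
      injection h with h'
      injection h' with h''
      injection h'' with h1 h2
      exact absurd h1 hcc

lemma adj_succ {k ℓ : ℕ} {a b : TVert k (ℓ + 1)} (h : (TGraph k (ℓ + 1)).Adj a b) :
    (∃ x y, (Pgraph 5).Adj x y ∧ a = embedP k ℓ x ∧ b = embedP k ℓ y) ∨
    (∃ c x y, (TGraph k ℓ).Adj x y ∧ a = embedT k ℓ c x ∧ b = embedT k ℓ c y) := by
  rw [TGraph, SimpleGraph.fromRel_adj] at h
  obtain ⟨hne, h | h⟩ := h
  · exact h
  · rcases h with ⟨x, y, hxy, hb, ha⟩ | ⟨c, x, y, hxy, hb, ha⟩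
    · exact Or.inl ⟨y, x, hxy.symm, ha, hb⟩
    · exact Or.inr ⟨c, y, x, hxy.symm, ha, hb⟩

end Embed
lemma TGraph_good (k : ℕ) : ∀ ℓ : ℕ,
    (∀ x y z : TVert k ℓ, (TGraph k ℓ).Adj x y → (TGraph k ℓ).Adj x z →
      (TGraph k ℓ).Adj y z → False) ∧
    (∀ s t : Fin 2, ¬ (TGraph k ℓ).Adj (Sum.inl s) (Sum.inl t)) ∧
    (∀ (s t : Fin 2) (w : TVert k ℓ), s ≠ t → (TGraph k ℓ).Adj (Sum.inl s) w →
      (TGraph k ℓ).Adj (Sum.inl t) w → False) := by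
  intro ℓ
  induction ℓ with
  | zero => exact ⟨fun x y z h1 h2 h3 => Pnt h1 h2 h3, PUV, PCN⟩
  | succ ℓ ih =>
    obtain ⟨ihNT, ihUV, ihCN⟩ := ih
    refine ⟨?_, ?_, ?_⟩
    · -- triangle-free
      intro a b c hab hac hbc
      have hne_ab : a ≠ b := hab.ne
      have hne_ac : a ≠ c := hac.ne
      have hne_bc : b ≠ c := hbc.ne
      rcases adj_succ hab with ⟨pa, pb, hP1, ha1, hb1⟩ | ⟨c1, xa, xb, hT1, ha1, hb1⟩ <;>
        rcases adj_succ hac with ⟨pa2, pc2, hP2, ha2, hc2⟩ | ⟨c2, ya, yc, hT2, ha2, hc2⟩ <;>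
        rcases adj_succ hbc with ⟨pb3, pc3, hP3, hb3, hc3⟩ | ⟨c3, zb, zc, hT3, hb3, hc3⟩
      · -- P P P
        have e1 : pa2 = pa := embedP_inj (ha2.symm.trans ha1)
        have e2 : pb3 = pb := embedP_inj (hb3.symm.trans hb1)
        have e3 : pc3 = pc2 := embedP_inj (hc3.symm.trans hc2)
        rw [e1] at hP2; rw [e2, e3] at hP3
        exact Pnt hP1 hP2 hP3
      · -- P P T
        obtain ⟨s, hs⟩ := specOfP (hb3.symm.trans hb1)
        obtain ⟨t, ht⟩ := specOfP (hc3.symm.trans hc2)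
        rw [hs, ht] at hT3
        exact ihUV s t hT3
      · -- P T P
        obtain ⟨s, hs⟩ := specOfP (ha2.symm.trans ha1)
        obtain ⟨t, ht⟩ := specOfP (hc2.symm.trans hc3)
        rw [hs, ht] at hT2
        exact ihUV s t hT2
      · -- P T T
        by_cases h23 : c2 = c3
        · subst h23
          have eyz : yc = zc := embedT_inj c2 (hc2.symm.trans hc3)
          obtain ⟨s, hs⟩ := specOfP (ha2.symm.trans ha1)
          obtain ⟨t, ht⟩ := specOfP (hb3.symm.trans hb1)
          have hst : s ≠ t := fun hh => hne_ab (by rw [ha2, hb3, hs, ht, hh])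
          rw [hs, eyz] at hT2; rw [ht] at hT3
          exact ihCN s t zc hst hT2 hT3
        · obtain ⟨⟨s, hs⟩, -⟩ := specOfNe h23 (hc2.symm.trans hc3)
          obtain ⟨s', hs'⟩ := specOfP (ha2.symm.trans ha1)
          rw [hs', hs] at hT2
          exact ihUV s' s hT2
      · -- T P P
        obtain ⟨s, hs⟩ := specOfP (ha1.symm.trans ha2)
        obtain ⟨t, ht⟩ := specOfP (hb1.symm.trans hb3)
        rw [hs, ht] at hT1
        exact ihUV s t hT1
      · -- T P T
        by_cases h13 : c1 = c3
        · subst h13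
          have exz : xb = zb := embedT_inj c1 (hb1.symm.trans hb3)
          obtain ⟨s, hs⟩ := specOfP (ha1.symm.trans ha2)
          obtain ⟨t, ht⟩ := specOfP (hc3.symm.trans hc2)
          have hst : s ≠ t := fun hh => hne_ac (by rw [ha1, hc3, hs, ht, hh])
          rw [hs, exz] at hT1; rw [ht] at hT3
          exact ihCN s t zb hst hT1 hT3.symm
        · obtain ⟨⟨s, hs⟩, -⟩ := specOfNe h13 (hb1.symm.trans hb3)
          obtain ⟨s', hs'⟩ := specOfP (ha1.symm.trans ha2)
          rw [hs', hs] at hT1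
          exact ihUV s' s hT1
      · -- T T P
        by_cases h12 : c1 = c2
        · subst h12
          have exy : xa = ya := embedT_inj c1 (ha1.symm.trans ha2)
          obtain ⟨s, hs⟩ := specOfP (hb1.symm.trans hb3)
          obtain ⟨t, ht⟩ := specOfP (hc2.symm.trans hc3)
          have hst : s ≠ t := fun hh => hne_bc (by rw [hb1, hc2, hs, ht, hh])
          rw [hs, exy] at hT1; rw [ht] at hT2
          exact ihCN s t ya hst hT1.symm hT2.symm
        · obtain ⟨⟨s, hs⟩, -⟩ := specOfNe h12 (ha1.symm.trans ha2)
          obtain ⟨s', hs'⟩ := specOfP (hb1.symm.trans hb3)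
          rw [hs, hs'] at hT1
          exact ihUV s s' hT1
      · -- T T T
        by_cases h12 : c1 = c2
        · subst h12
          by_cases h13 : c1 = c3
          · subst h13
            have exy : xa = ya := embedT_inj c1 (ha1.symm.trans ha2)
            have exz : xb = zb := embedT_inj c1 (hb1.symm.trans hb3)
            have eyz : yc = zc := embedT_inj c1 (hc2.symm.trans hc3)
            rw [← exy] at hT2
            rw [← exz, ← eyz] at hT3
            exact ihNT xa xb yc hT1 hT2 hT3
          · have exy : xa = ya := embedT_inj c1 (ha1.symm.trans ha2)
            obtain ⟨⟨s, hs⟩, -⟩ := specOfNe h13 (hb1.symm.trans hb3)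
            obtain ⟨⟨t, ht⟩, -⟩ := specOfNe h13 (hc2.symm.trans hc3)
            have hst : s ≠ t := fun hh => hne_bc (by rw [hb1, hc2, hs, ht, hh])
            rw [hs, exy] at hT1; rw [ht] at hT2
            exact ihCN s t ya hst hT1.symm hT2.symm
        · by_cases h13 : c1 = c3
          · subst h13
            have exz : xb = zb := embedT_inj c1 (hb1.symm.trans hb3)
            obtain ⟨⟨s, hs⟩, -⟩ := specOfNe h12 (ha1.symm.trans ha2)
            obtain ⟨⟨t, ht⟩, -⟩ := specOfNe h12 (hc3.symm.trans hc2)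
            have hst : s ≠ t := fun hh => hne_ac (by rw [ha1, hc3, hs, ht, hh])
            rw [hs, exz] at hT1; rw [ht] at hT3
            exact ihCN s t zb hst hT1 hT3.symm
          · obtain ⟨⟨s, hs⟩, -⟩ := specOfNe h12 (ha1.symm.trans ha2)
            obtain ⟨⟨t, ht⟩, -⟩ := specOfNe h13 (hb1.symm.trans hb3)
            rw [hs, ht] at hT1
            exact ihUV s t hT1
    · -- u, v and their images are non-adjacent
      intro s t h
      rcases adj_succ h with ⟨x, y, hxy, ha, hb⟩ | ⟨c, x, y, hxy, ha, hb⟩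
      · rw [embedP_inl_inv ha, embedP_inl_inv hb] at hxy
        exact PUV s t hxy
      · obtain ⟨z, hz⟩ := embedT_isr k ℓ c x
        rw [hz] at ha
        exact absurd ha (by simp)
    · -- no common neighbour of u and v
      intro s t w hst h1 h2
      rcases adj_succ h1 with ⟨x, y, hxy, ha, hb⟩ | ⟨c, x, y, hxy, ha, hb⟩
      swap
      · obtain ⟨z, hz⟩ := embedT_isr k ℓ c x
        rw [hz] at ha
        exact absurd ha (by simp)
      rcases adj_succ h2 with ⟨x', y', hxy', ha', hb'⟩ | ⟨c, x', y', hxy', ha', hb'⟩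
      swap
      · obtain ⟨z, hz⟩ := embedT_isr k ℓ c x'
        rw [hz] at ha'
        exact absurd ha' (by simp)
      rw [embedP_inl_inv ha] at hxy
      rw [embedP_inl_inv ha'] at hxy'
      have hy : y = y' := embedP_inj (hb.symm.trans hb')
      rw [hy] at hxy
      exact PCN s t y' hst hxy hxy'

/-- For all `ℓ ≥ 0` and `k ≥ 1`, the graph `T(u,v,k,ℓ)` is triangle-free. -/
theorem stmt5 (k ℓ : ℕ) (hk : 1 ≤ k) : (TGraph k ℓ).CliqueFree 3 := by
  classical
  intro t ht
  rw [SimpleGraph.is3Clique_iff] at ht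
  obtain ⟨a, b, c, h1, h2, h3, -⟩ := ht
  exact (TGraph_good k ℓ).1 a b c h1 h2 h3
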